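/- Let γ, p ∈ ℝ with 0 ≤ γ + 2p < 1, let Φ : (0,1) → [0,∞) be measurable with Φ(s) ≤ c₂·s^{−p}(1−s)^{−p} for all s ∈ (0,1), suppose Φ(s) = Φ(1−s) for s ∈ (0,1), and set K(x,y) = (x+y)^γ Φ(x/(x+y)). Let f : (0,∞) → [0,∞) be measurable such that H(X) := e^{(γ+3)X/2} f(e^X) is bounded on ℝ, and define W(Y) = (e^{Y/2}+e^{−Y/2})^γ Φ(1/(1+e^Y)). Then for every X ∈ ℝ: J(e^X; f) = B(H,H;W)(X). -/
import Mathlib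


open MeasureTheory Real Set

/-- The mass flux `J(x;f) = ∫₀^x ∫_{x−y}^{∞} K(y,z) y f(y) f(z) dz dy`. -/
noncomputable def coagJ (K : ℝ → ℝ → ℝ) (f : ℝ → ℝ) (x : ℝ) : ℝ :=
  ∫ y in Set.Ioo 0 x, ∫ z in Set.Ioi (x - y), K y z * y * f y * f z

/-- The bilinear coagulation flux operator in logarithmic variables:
`B(H₁,H₂;W)(X) = ∫_{−∞}^X ∫_{X+log(1−e^{Y−X})}^{∞} e^{(Y−Z)/2} W(Y−Z) H₁(Y) H₂(Z) dZ dY`. -/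
noncomputable def coagB (W H₁ H₂ : ℝ → ℝ) (X : ℝ) : ℝ :=
  ∫ Y in Set.Iio X, ∫ Z in Set.Ioi (X + Real.log (1 - Real.exp (Y - X))),
    Real.exp ((Y - Z) / 2) * W (Y - Z) * H₁ Y * H₂ Z


lemma exp_image_Iio (X : ℝ) : Real.exp '' Set.Iio X = Set.Ioo 0 (Real.exp X) := by
  ext x
  constructor
  · rintro ⟨y, hy, rfl⟩
    exact ⟨Real.exp_pos y, Real.exp_lt_exp.2 hy⟩
  · rintro ⟨h0, h1⟩
    exact ⟨Real.log x, (Real.log_lt_iff_lt_exp h0).2 h1, Real.exp_log h0⟩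

lemma exp_image_Ioi (a : ℝ) : Real.exp '' Set.Ioi a = Set.Ioi (Real.exp a) := by
  ext x
  constructor
  · rintro ⟨y, hy, rfl⟩
    exact Real.exp_lt_exp.2 hy
  · intro h
    exact ⟨Real.log x, (Real.lt_log_iff_exp_lt (lt_trans (Real.exp_pos a) h)).2 h,
      Real.exp_log (lt_trans (Real.exp_pos a) h)⟩

lemma exp_cov_Ioi (a : ℝ) (g : ℝ → ℝ) :
    ∫ z in Set.Ioi (Real.exp a), g z = ∫ Z in Set.Ioi a, Real.exp Z * g (Real.exp Z) := by
  rw [← exp_image_Ioi, integral_image_eq_integral_abs_deriv_smul measurableSet_Ioi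
    (fun x _ => (Real.hasDerivAt_exp x).hasDerivWithinAt) Real.exp_injective.injOn g]
  simp [abs_of_pos (Real.exp_pos _), smul_eq_mul]

lemma exp_cov_Iio (X : ℝ) (g : ℝ → ℝ) :
    ∫ y in Set.Ioo 0 (Real.exp X), g y = ∫ Y in Set.Iio X, Real.exp Y * g (Real.exp Y) := by
  rw [← exp_image_Iio, integral_image_eq_integral_abs_deriv_smul measurableSet_Iio
    (fun x _ => (Real.hasDerivAt_exp x).hasDerivWithinAt) Real.exp_injective.injOn g]
  simp [abs_of_pos (Real.exp_pos _), smul_eq_mul]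

/-- the flux of `f` for the kernel `K(x,y) = (x+y)^γ Φ(x/(x+y))`,
expressed in logarithmic variables `H(X) = e^{(γ+3)X/2} f(e^X)` and
`W(Y) = (e^{Y/2}+e^{−Y/2})^γ Φ(1/(1+e^Y))`, satisfies `J(e^X;f) = B(H,H;W)(X)`. -/
theorem stmt_4 (γ p : ℝ) (h0 : 0 ≤ γ + 2 * p) (h1 : γ + 2 * p < 1)
    (Φ : ℝ → ℝ) (hΦmeas : Measurable Φ)
    (hΦnn : ∀ s ∈ Set.Ioo (0 : ℝ) 1, 0 ≤ Φ s)
    (c₂ : ℝ)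
    (hΦub : ∀ s ∈ Set.Ioo (0 : ℝ) 1, Φ s ≤ c₂ * s ^ (-p) * (1 - s) ^ (-p))
    (hΦsym : ∀ s ∈ Set.Ioo (0 : ℝ) 1, Φ s = Φ (1 - s))
    (K : ℝ → ℝ → ℝ)
    (hK : ∀ x y : ℝ, K x y = (x + y) ^ γ * Φ (x / (x + y)))
    (f : ℝ → ℝ) (hfmeas : Measurable f) (hfnn : ∀ x : ℝ, 0 < x → 0 ≤ f x)
    (H : ℝ → ℝ)
    (hH : ∀ X : ℝ, H X = Real.exp ((γ + 3) * X / 2) * f (Real.exp X))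
    (M : ℝ) (hHbd : ∀ X : ℝ, |H X| ≤ M)
    (W : ℝ → ℝ)
    (hW : ∀ Y : ℝ, W Y =
      (Real.exp (Y / 2) + Real.exp (-Y / 2)) ^ γ * Φ (1 / (1 + Real.exp Y))) :
    ∀ X : ℝ, coagJ K f (Real.exp X) = coagB W H H X := by
  -- key pointwise identity
  have key : ∀ Y Z : ℝ,
      Real.exp Y * (Real.exp Z * (K (Real.exp Y) (Real.exp Z) * Real.exp Y *
        f (Real.exp Y) * f (Real.exp Z))) =
      Real.exp ((Y - Z) / 2) * W (Y - Z) * H Y * H Z := by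
    intro Y Z
    rw [hK, hW, hH, hH]
    have hsΦ : Φ (Real.exp Y / (Real.exp Y + Real.exp Z)) =
        Φ (1 / (1 + Real.exp (Y - Z))) := by
      have harg : Real.exp Y / (Real.exp Y + Real.exp Z) = 1 / (1 + Real.exp (Z - Y)) := by
        rw [Real.exp_sub]
        have h2 : Real.exp Y ≠ 0 := (Real.exp_pos Y).ne'
        have h3 : Real.exp Y + Real.exp Z > 0 := by positivity
        field_simp
      have hmem : 1 / (1 + Real.exp (Z - Y)) ∈ Set.Ioo (0 : ℝ) 1 := by
        have := Real.exp_pos (Z - Y)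
        constructor
        · positivity
        · rw [div_lt_one (by positivity)]; linarith
      rw [harg, hΦsym _ hmem]
      congr 1
      rw [Real.exp_sub, Real.exp_sub]
      have h2 : Real.exp Y ≠ 0 := (Real.exp_pos Y).ne'
      have h3 : Real.exp Z ≠ 0 := (Real.exp_pos Z).ne'
      field_simp
      ring
    have hpow : (Real.exp Y + Real.exp Z) ^ γ =
        Real.exp ((Y + Z) / 2 * γ) *
          (Real.exp ((Y - Z) / 2) + Real.exp (-(Y - Z) / 2)) ^ γ := by
      have hsum : Real.exp Y + Real.exp Z =
          Real.exp ((Y + Z) / 2) * (Real.exp ((Y - Z) / 2) + Real.exp (-(Y - Z) / 2)) := by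
        rw [mul_add, ← Real.exp_add, ← Real.exp_add]
        congr 1 <;> ring
      rw [hsum, Real.mul_rpow (Real.exp_pos _).le (by positivity), ← Real.exp_mul]
    rw [hpow, hsΦ]
    have E : Real.exp Y * Real.exp Z * Real.exp ((Y + Z) / 2 * γ) * Real.exp Y =
        Real.exp ((Y - Z) / 2) * Real.exp ((γ + 3) * Y / 2) * Real.exp ((γ + 3) * Z / 2) := by
      simp only [← Real.exp_add]
      congr 1; ring
    linear_combination
      ((Real.exp ((Y - Z) / 2) + Real.exp (-(Y - Z) / 2)) ^ γ *
        Φ (1 / (1 + Real.exp (Y - Z))) * f (Real.exp Y) * f (Real.exp Z)) * E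
  intro X
  unfold coagJ coagB
  rw [exp_cov_Iio]
  refine setIntegral_congr_fun measurableSet_Iio fun Y hY => ?_
  have hYX : Y < X := hY
  have ht : (0 : ℝ) < 1 - Real.exp (Y - X) := by
    have : Real.exp (Y - X) < 1 := Real.exp_lt_one_iff.2 (by linarith)
    linarith
  have hlb : Real.exp X - Real.exp Y = Real.exp (X + Real.log (1 - Real.exp (Y - X))) := by
    rw [Real.exp_add, Real.exp_log ht, mul_sub, mul_one, ← Real.exp_add]
    congr 2; ring
  rw [hlb, exp_cov_Ioi, ← MeasureTheory.integral_const_mul]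
  refine setIntegral_congr_fun measurableSet_Ioi fun Z _ => ?_
  exact key Y Z
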